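/- If a sequence {θ(n)} of positive reals is slowly varying, then lim_{n→∞} (log θ(n))/(log n) = 0. -/

import Mathlib

open Filter

/-- A sequence `{θ(n)}` of positive reals is slowly varying if there is a
sequence of positive reals `{f(n)}` with `θ(n)/f(n) → K > 0` and
`n(1 - f(n-1)/f(n)) → 0`. -/
def SlowlyVarying (θ : ℕ → ℝ) : Prop :=
  (∀ n, 1 ≤ n → 0 < θ n) ∧
  ∃ f : ℕ → ℝ, (∀ n, 1 ≤ n → 0 < f n) ∧
    (∃ K : ℝ, 0 < K ∧ Tendsto (fun n => θ n / f n) atTop (nhds K)) ∧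
    Tendsto (fun n : ℕ => (n : ℝ) * (1 - f (n - 1) / f n)) atTop (nhds 0)

/-- If `{θ(n)}` is slowly varying, then `log θ(n) / log n → 0`. -/
theorem stmt2 (θ : ℕ → ℝ) (hθ : SlowlyVarying θ) :
    Tendsto (fun n : ℕ => Real.log (θ n) / Real.log n) atTop (nhds 0) := by
  obtain ⟨hpos, f, hf, ⟨K, hK, hKlim⟩, hslow⟩ := hθ
  have hlogtop : Tendsto (fun n : ℕ => Real.log n) atTop atTop :=
    Real.tendsto_log_atTop.comp tendsto_natCast_atTop_atTop
  -- increments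
  set b : ℕ → ℝ := fun i => Real.log (f (i + 1)) - Real.log (f i) with hb
  set g : ℕ → ℝ := fun i => Real.log ((i : ℝ) + 2) - Real.log ((i : ℝ) + 1) with hg
  set r : ℕ → ℝ := fun i => f i / f (i + 1) with hrdef
  -- step 1 : (i+1)(1 - r i) → 0
  have h1 : Tendsto (fun i : ℕ => ((i : ℝ) + 1) * (1 - r i)) atTop (nhds 0) := by
    have h := hslow.comp (tendsto_add_atTop_nat 1)
    apply h.congr
    intro i
    simp only [Function.comp_apply, Nat.add_sub_cancel, hrdef]
    push_cast
    ring
  -- step 2 : r → 1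
  have hr1 : Tendsto r atTop (nhds 1) := by
    have h2 : Tendsto (fun i : ℕ => (1 : ℝ) - r i) atTop (nhds 0) := by
      have := h1.mul tendsto_one_div_add_atTop_nhds_zero_nat
      simp only [mul_zero] at this
      apply this.congr
      intro i
      have : ((i : ℝ) + 1) ≠ 0 := by positivity
      field_simp
    have := (tendsto_const_nhds (x := (1 : ℝ))).sub h2
    simpa using this
  -- step 3 : (i+1) * b i → 0 by squeeze
  have hb0 : Tendsto (fun i : ℕ => ((i : ℝ) + 1) * b i) atTop (nhds 0) := by
    have hupper : Tendsto (fun i : ℕ => ((i : ℝ) + 1) * (1 - r i) * (r i)⁻¹) atTop (nhds 0) := by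
      have := h1.mul (hr1.inv₀ one_ne_zero)
      simpa using this
    apply tendsto_of_tendsto_of_tendsto_of_le_of_le' h1 hupper
    · filter_upwards [eventually_ge_atTop 1] with i hi
      have hfi := hf i hi
      have hfi1 := hf (i + 1) (by omega)
      have hri : 0 < r i := div_pos hfi hfi1
      have hlog : Real.log (r i) ≤ r i - 1 := Real.log_le_sub_one_of_pos hri
      have hbi : b i = -Real.log (r i) := by
        simp only [hb, hrdef, Real.log_div hfi.ne' hfi1.ne']; ring
      rw [hbi]
      have : (0 : ℝ) ≤ (i : ℝ) + 1 := by positivity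
      nlinarith
    · filter_upwards [eventually_ge_atTop 1] with i hi
      have hfi := hf i hi
      have hfi1 := hf (i + 1) (by omega)
      have hri : 0 < r i := div_pos hfi hfi1
      have hlog : 1 - (r i)⁻¹ ≤ Real.log (r i) := Real.one_sub_inv_le_log_of_pos hri
      have hbi : b i = -Real.log (r i) := by
        simp only [hb, hrdef, Real.log_div hfi.ne' hfi1.ne']; ring
      rw [hbi]
      have h2 : (0 : ℝ) ≤ (i : ℝ) + 1 := by positivity
      have h3 : (0 : ℝ) < (r i)⁻¹ := by positivity
      have h4 : -Real.log (r i) ≤ (r i)⁻¹ - 1 := by linarith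
      have h5 : (r i)⁻¹ - 1 = (1 - r i) * (r i)⁻¹ := by
        field_simp
      nlinarith
  -- g positivity
  have hgpos : ∀ i, 0 < g i := by
    intro i
    have : Real.log ((i : ℝ) + 1) < Real.log ((i : ℝ) + 2) :=
      Real.log_lt_log (by positivity) (by linarith)
    simpa [hg] using sub_pos.mpr this
  -- step 5 : (i+1) * g i → 1
  have hg1 : Tendsto (fun i : ℕ => ((i : ℝ) + 1) * g i) atTop (nhds 1) := by
    have key := (Real.tendsto_mul_log_one_add_div_atTop 1).comp
      (tendsto_atTop_add_const_right atTop (1 : ℝ) tendsto_natCast_atTop_atTop)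
    apply key.congr
    intro i
    have hi1 : (0 : ℝ) < (i : ℝ) + 1 := by positivity
    simp only [Function.comp_apply, hg]
    rw [show (1 : ℝ) + 1 / ((i : ℝ) + 1) = ((i : ℝ) + 2) / ((i : ℝ) + 1) by field_simp; ring,
      Real.log_div (by positivity) hi1.ne']
  -- step 6 : b =o[atTop] g
  have hbo : b =o[atTop] g := by
    rw [Asymptotics.isLittleO_iff_tendsto' (by
      filter_upwards with i hi; exact absurd hi (hgpos i).ne')]
    have := hb0.div hg1 one_ne_zero
    simp only [zero_div] at this
    apply this.congr
    intro i
    have hi1 : ((i : ℝ) + 1) ≠ 0 := by positivity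
    simp only [Pi.div_apply]
    rw [mul_div_mul_left _ _ hi1]
  -- sums
  have hsumb : ∀ n, ∑ i ∈ Finset.range n, b i = Real.log (f n) - Real.log (f 0) :=
    fun n => Finset.sum_range_sub (fun i => Real.log (f i)) n
  have hsumg : ∀ n, ∑ i ∈ Finset.range n, g i = Real.log ((n : ℝ) + 1) := by
    intro n
    have : ∑ i ∈ Finset.range n, g i
        = Real.log ((n : ℝ) + 1) - Real.log ((0 : ℕ) + 1 : ℝ) := by
      have := Finset.sum_range_sub (fun i : ℕ => Real.log ((i : ℝ) + 1)) n
      rw [← this]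
      apply Finset.sum_congr rfl
      intro i _
      simp only [hg]
      push_cast
      ring_nf
    simpa using this
  have hgsumtop : Tendsto (fun n : ℕ => ∑ i ∈ Finset.range n, g i) atTop atTop := by
    simp only [hsumg]
    exact Real.tendsto_log_atTop.comp
      (tendsto_atTop_add_const_right atTop (1 : ℝ) tendsto_natCast_atTop_atTop)
  have hsum : (fun n => ∑ i ∈ Finset.range n, b i) =o[atTop]
      (fun n => ∑ i ∈ Finset.range n, g i) :=
    hbo.sum_range (fun i => (hgpos i).le) hgsumtop
  -- (log f n - log f 0) / log (n+1) → 0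
  have h7 : Tendsto (fun n : ℕ => (Real.log (f n) - Real.log (f 0)) / Real.log ((n : ℝ) + 1))
      atTop (nhds 0) := by
    have := hsum.tendsto_div_nhds_zero
    simp only [hsumb, hsumg] at this
    exact this
  -- log (n+1) / log n → 1
  have h8 : Tendsto (fun n : ℕ => Real.log ((n : ℝ) + 1) / Real.log n) atTop (nhds 1) := by
    have h9 : Tendsto (fun n : ℕ => (Real.log ((n : ℝ) + 1) - Real.log n) / Real.log n)
        atTop (nhds 0) := Tendsto.div_atTop Real.tendsto_log_nat_add_one_sub_log hlogtop
    have := h9.add (tendsto_const_nhds (x := (1 : ℝ)))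
    rw [zero_add] at this
    apply this.congr'
    filter_upwards [eventually_ge_atTop 2] with n hn
    have hln : Real.log n ≠ 0 := by
      have : (1 : ℝ) < (n : ℝ) := by exact_mod_cast Nat.lt_of_lt_of_le one_lt_two hn
      exact (Real.log_pos this).ne'
    field_simp
    ring
  -- log f n / log n → 0
  have h10 : Tendsto (fun n : ℕ => Real.log (f n) / Real.log n) atTop (nhds 0) := by
    have h11 : Tendsto (fun n : ℕ => (Real.log (f n) - Real.log (f 0)) / Real.log n)
        atTop (nhds 0) := by
      have := h7.mul h8
      rw [zero_mul] at this
      apply this.congr'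
      filter_upwards [eventually_ge_atTop 1] with n hn
      have hln1 : Real.log ((n : ℝ) + 1) ≠ 0 := by
        have : (1 : ℝ) < (n : ℝ) + 1 := by
          have : (1 : ℝ) ≤ (n : ℝ) := by exact_mod_cast hn
          linarith
        exact (Real.log_pos this).ne'
      field_simp
    have h12 : Tendsto (fun n : ℕ => Real.log (f 0) / Real.log n) atTop (nhds 0) :=
      tendsto_const_nhds.div_atTop hlogtop
    have := h11.add h12
    rw [add_zero] at this
    apply this.congr
    intro n
    ring
  -- log (θ n / f n) / log n → 0
  have h13 : Tendsto (fun n : ℕ => Real.log (θ n / f n) / Real.log n) atTop (nhds 0) :=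
    Tendsto.div_atTop (((Real.continuousAt_log hK.ne').tendsto).comp hKlim) hlogtop
  have := h13.add h10
  rw [add_zero] at this
  apply this.congr'
  filter_upwards [eventually_ge_atTop 1] with n hn
  rw [Real.log_div (hpos n hn).ne' (hf n hn).ne']
  ring
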